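/- Horodecki positive-maps separability criterion: A density matrix ρ on ℂ^{d_A} ⊗ ℂ^{d_B} is separable if and only if for every positive linear map Λ from d_B × d_B complex matrices to d_A × d_A complex matrices, the matrix (I_{d_A} ⊗ Λ)(ρ) is positive semidefinite. -/

import Mathlib

open scoped BigOperators ComplexOrder

/-- The rank-one matrix `x x*`, with entries `(x x*)_{ij} = x i * conj (x j)`. -/
def vecProjector {d : ℕ} (x : Fin d → ℂ) : Matrix (Fin d) (Fin d) ℂ :=
  fun i j => x i * (starRingEnd ℂ) (x j)

/-- A density matrix on `ℂ^{d_A} ⊗ ℂ^{d_B}` is separable if it is a finite convex combination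
of Kronecker products of rank-one projectors onto unit vectors. -/
def SeparableState {dA dB : ℕ}
    (ρ : Matrix (Fin dA × Fin dB) (Fin dA × Fin dB) ℂ) : Prop :=
  ∃ (K : ℕ) (p : Fin K → ℝ) (x : Fin K → Fin dA → ℂ) (y : Fin K → Fin dB → ℂ),
    (∀ k, 0 ≤ p k) ∧ (∑ k, p k = 1) ∧
    (∀ k, ∑ a, Complex.normSq (x k a) = 1) ∧
    (∀ k, ∑ b, Complex.normSq (y k b) = 1) ∧
    ρ = ∑ k, (p k : ℂ) •
      Matrix.kroneckerMap (· * ·) (vecProjector (x k)) (vecProjector (y k))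

/-- A linear map between matrix algebras is positive if it maps positive semidefinite
matrices to positive semidefinite matrices. -/
def IsPositiveMap {d d' : ℕ}
    (Λ : Matrix (Fin d) (Fin d) ℂ →ₗ[ℂ] Matrix (Fin d') (Fin d') ℂ) : Prop :=
  ∀ X : Matrix (Fin d) (Fin d) ℂ, X.PosSemidef → (Λ X).PosSemidef

/-- The blockwise extension `I_n ⊗ Λ`, defined by
`((I_n ⊗ Λ)(X))_{(i,μ),(j,ν)} = (Λ(X^{(i,j)}))_{μν}` where `X^{(i,j)}_{μν} = X_{(i,μ),(j,ν)}`. -/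
def extendMap {n d d' : ℕ}
    (Λ : Matrix (Fin d) (Fin d) ℂ →ₗ[ℂ] Matrix (Fin d') (Fin d') ℂ)
    (X : Matrix (Fin n × Fin d) (Fin n × Fin d) ℂ) :
    Matrix (Fin n × Fin d') (Fin n × Fin d') ℂ :=
  fun p q => Λ (Matrix.of fun μ ν => X (p.1, μ) (q.1, ν)) p.2 q.2

/-! ### Auxiliary material for the proof -/

attribute [local instance] Matrix.normedAddCommGroup Matrix.normedSpace

section CompactHull

variable {E : Type*} [NormedAddCommGroup E] [NormedSpace ℝ E] [FiniteDimensional ℝ E]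

/-- The convex hull of a compact set in a finite-dimensional real normed space is compact. -/
theorem myIsCompact_convexHull {s : Set E} (hs : IsCompact s) :
    IsCompact (convexHull ℝ s) := by
  classical
  rcases s.eq_empty_or_nonempty with rfl | ⟨s₀, hs₀⟩
  · simp
  set n := Module.finrank ℝ E + 1 with hn
  set K : Set ((Fin n → ℝ) × (Fin n → E)) :=
    (stdSimplex ℝ (Fin n)) ×ˢ (Set.univ.pi fun _ => s) with hK
  have hKc : IsCompact K := (isCompact_stdSimplex _ _).prod (isCompact_univ_pi fun _ => hs)
  have hcont : Continuous fun wz : (Fin n → ℝ) × (Fin n → E) => ∑ i, wz.1 i • wz.2 i :=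
    continuous_finset_sum _ fun i _ =>
      ((continuous_apply i).comp continuous_fst).smul ((continuous_apply i).comp continuous_snd)
  have himg : (fun wz : (Fin n → ℝ) × (Fin n → E) => ∑ i, wz.1 i • wz.2 i) '' K
      = convexHull ℝ s := by
    apply Set.Subset.antisymm
    · rintro x ⟨⟨w, z⟩, ⟨hw, hz⟩, rfl⟩
      exact Convex.sum_mem (convex_convexHull ℝ s) (fun i _ => hw.1 i) hw.2
        (fun i _ => subset_convexHull ℝ s (hz i (Set.mem_univ i)))
    · intro x hx
      obtain ⟨ι, hι, z, w, hzs, hai, hwpos, hwsum, hres⟩ :=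
        eq_pos_convex_span_of_mem_convexHull hx
      have hcard : Fintype.card ι ≤ n := by
        refine (hai.card_le_finrank_succ).trans ?_
        exact Nat.add_le_add_right (Submodule.finrank_le _) 1
      obtain ⟨f⟩ := Function.Embedding.nonempty_of_card_le (by simpa using hcard :
        Fintype.card ι ≤ Fintype.card (Fin n))
      set w' : Fin n → ℝ := fun i => if h : ∃ j, f j = i then w h.choose else 0 with hw'
      set z' : Fin n → E := fun i => if h : ∃ j, f j = i then z h.choose else s₀ with hz'
      have hfj : ∀ j : ι, (∃ j', f j' = f j) := fun j => ⟨j, rfl⟩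
      have hchoose : ∀ j : ι, (hfj j).choose = j := fun j => f.injective (hfj j).choose_spec
      have key2 : ∀ (F : ℝ → E → ℝ) (hF0 : ∀ e, F 0 e = 0),
          ∑ i, F (w' i) (z' i) = ∑ j, F (w j) (z j) := by
        intro F hF0
        have h1 : ∑ i : Fin n, F (w' i) (z' i) = ∑ i ∈ Finset.univ.map f, F (w' i) (z' i) := by
          refine (Finset.sum_subset (Finset.subset_univ _) ?_).symm
          intro i _ hi
          have : ¬ ∃ j, f j = i := by
            intro ⟨j, hj⟩; exact hi (by simpa [hj] using Finset.mem_map_of_mem f (Finset.mem_univ j))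
          simp [hw', hz', this, hF0]
        rw [h1, Finset.sum_map]
        refine Finset.sum_congr rfl fun j _ => ?_
        simp only [hw', hz', Function.Embedding.coeFn_mk, dif_pos (hfj j), hchoose j]
      have key : ∀ (F : ℝ → E → E) (hF0 : ∀ e, F 0 e = 0),
          ∑ i, F (w' i) (z' i) = ∑ j, F (w j) (z j) := by
        intro F hF0
        have h1 : ∑ i : Fin n, F (w' i) (z' i) = ∑ i ∈ Finset.univ.map f, F (w' i) (z' i) := by
          refine (Finset.sum_subset (Finset.subset_univ _) ?_).symm
          intro i _ hi
          have : ¬ ∃ j, f j = i := by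
            intro ⟨j, hj⟩; exact hi (by simpa [hj] using Finset.mem_map_of_mem f (Finset.mem_univ j))
          simp [hw', hz', this, hF0]
        rw [h1, Finset.sum_map]
        refine Finset.sum_congr rfl fun j _ => ?_
        simp only [hw', hz', Function.Embedding.coeFn_mk, dif_pos (hfj j), hchoose j]
      refine ⟨⟨w', z'⟩, ⟨⟨fun i => ?_, ?_⟩, fun i _ => ?_⟩, ?_⟩
      · by_cases h : ∃ j, f j = i <;> simp [hw', h] <;> exact (hwpos _).le
      · exact (key2 (fun a _ => a) (by simp)).trans hwsum
      · by_cases h : ∃ j, f j = i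
        · simpa [hz', h] using hzs ⟨h.choose, rfl⟩
        · simpa [hz', h] using hs₀
      · exact (key (fun a e => a • e) (by simp)).trans hres
  rw [← himg]
  exact hKc.image hcont

end CompactHull

namespace Horodecki

noncomputable section

local notation "conj'" => starRingEnd ℂ

/-! #### Generalities -/

lemma quad {m : Type*} [Fintype m] (M : Matrix m m ℂ) (v : m → ℂ) :
    dotProduct (star v) (M.mulVec v) = ∑ p, ∑ q, conj' (v p) * M p q * v q := by
  simp [dotProduct, Matrix.mulVec, Finset.mul_sum, mul_assoc]

lemma real_smul_matrix {m : Type*} (r : ℝ) (M : Matrix m m ℂ) :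
    r • M = (r : ℂ) • M := by
  ext i j
  simp [Matrix.smul_apply, Complex.real_smul]

lemma vecProjector_posSemidef {d : ℕ} (x : Fin d → ℂ) : (vecProjector x).PosSemidef := by
  refine Matrix.PosSemidef.of_dotProduct_mulVec_nonneg ?_ ?_
  · ext i j
    simp [Matrix.conjTranspose_apply, vecProjector, mul_comm]
  · intro v
    rw [quad]
    have : ∑ p, ∑ q, conj' (v p) * vecProjector x p q * v q
        = (∑ p, conj' (v p) * x p) * conj' (∑ p, conj' (v p) * x p) := by
      rw [map_sum, Finset.sum_mul]
      refine Finset.sum_congr rfl fun p _ => ?_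
      rw [Finset.mul_sum]
      refine Finset.sum_congr rfl fun q _ => ?_
      simp [vecProjector]
      ring
    rw [this, Complex.mul_conj]
    exact Complex.zero_le_real.2 (Complex.normSq_nonneg _)

variable {dA dB : ℕ}

lemma kron_isHermitian {A : Matrix (Fin dA) (Fin dA) ℂ} {B : Matrix (Fin dB) (Fin dB) ℂ}
    (hA : A.IsHermitian) (hB : B.IsHermitian) :
    (Matrix.kroneckerMap (· * ·) A B).IsHermitian := by
  ext p q
  have h1 : conj' (A q.1 p.1) = A p.1 q.1 := congrFun (congrFun hA p.1) q.1
  have h2 : conj' (B q.2 p.2) = B p.2 q.2 := congrFun (congrFun hB p.2) q.2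
  simp only [Matrix.conjTranspose_apply, Matrix.kroneckerMap_apply, star_mul']
  rw [← h1, ← h2]; rfl

lemma kron_proj_posSemidef (x : Fin dA → ℂ) {C : Matrix (Fin dB) (Fin dB) ℂ}
    (hC : C.PosSemidef) :
    (Matrix.kroneckerMap (· * ·) (vecProjector x) C).PosSemidef := by
  refine Matrix.PosSemidef.of_dotProduct_mulVec_nonneg ?_ ?_
  · refine kron_isHermitian ?_ hC.1
    ext i j; simp [Matrix.conjTranspose_apply, vecProjector, mul_comm]
  · intro v
    rw [quad]
    set u : Fin dB → ℂ := fun ν => ∑ j, conj' (x j) * v (j, ν) with hu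
    have key : ∑ p, ∑ q, conj' (v p) * (Matrix.kroneckerMap (· * ·) (vecProjector x) C) p q * v q
        = dotProduct (star u) (C.mulVec u) := by
      rw [quad]
      rw [Fintype.sum_prod_type]
      rw [Finset.sum_comm]
      refine Finset.sum_congr rfl fun μ _ => ?_
      have : ∀ i : Fin dA, ∑ q : Fin dA × Fin dB,
          conj' (v (i, μ)) * (Matrix.kroneckerMap (· * ·) (vecProjector x) C) (i, μ) q * v q
          = ∑ ν, ∑ j, conj' (v (i, μ)) * (x i * conj' (x j) * C μ ν) * v (j, ν) := by
        intro i
        rw [Fintype.sum_prod_type, Finset.sum_comm]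
        rfl
      simp only [this, hu]
      rw [Finset.sum_comm]
      refine Finset.sum_congr rfl fun ν _ => ?_
      simp only [map_sum, Finset.sum_mul, Finset.mul_sum]
      rw [Finset.sum_comm]
      refine Finset.sum_congr rfl fun i _ => Finset.sum_congr rfl fun j _ => ?_
      simp only [map_mul, Complex.conj_conj]
      ring
    rw [key]
    exact hC.dotProduct_mulVec_nonneg u

lemma posSemidef_real_smul {m : Type*} [Fintype m] {M : Matrix m m ℂ} (hM : M.PosSemidef)
    {r : ℝ} (hr : 0 ≤ r) : ((r : ℂ) • M).PosSemidef := by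
  refine Matrix.PosSemidef.of_dotProduct_mulVec_nonneg ?_ ?_
  · show Matrix.conjTranspose ((r : ℂ) • M) = (r : ℂ) • M
    rw [Matrix.conjTranspose_smul, hM.1]
    congr 1
    simp
  · intro v
    rw [Matrix.smul_mulVec, dotProduct_smul, smul_eq_mul]
    exact mul_nonneg (Complex.zero_le_real.2 hr) (hM.dotProduct_mulVec_nonneg v)

/-! #### The forward direction -/

lemma forward_dir (ρ : Matrix (Fin dA × Fin dB) (Fin dA × Fin dB) ℂ)
    (hsep : SeparableState ρ)
    (Λ : Matrix (Fin dB) (Fin dB) ℂ →ₗ[ℂ] Matrix (Fin dA) (Fin dA) ℂ)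
    (hΛ : IsPositiveMap Λ) : (extendMap Λ ρ).PosSemidef := by
  obtain ⟨K, p, x, y, hp0, _, _, _, rfl⟩ := hsep
  have key : extendMap Λ (∑ k, (p k : ℂ) •
      Matrix.kroneckerMap (· * ·) (vecProjector (x k)) (vecProjector (y k)))
      = ∑ k, (p k : ℂ) •
        Matrix.kroneckerMap (· * ·) (vecProjector (x k)) (Λ (vecProjector (y k))) := by
    funext P Q
    have hblock : (Matrix.of fun μ ν => (∑ k, (p k : ℂ) •
        Matrix.kroneckerMap (· * ·) (vecProjector (x k)) (vecProjector (y k))) (P.1, μ) (Q.1, ν))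
        = ∑ k, ((p k : ℂ) * (x k P.1 * (starRingEnd ℂ) (x k Q.1))) • vecProjector (y k) := by
      ext μ ν
      rw [Matrix.of_apply, Matrix.sum_apply, Matrix.sum_apply]
      refine Finset.sum_congr rfl fun k _ => ?_
      simp only [Matrix.smul_apply, Matrix.kroneckerMap_apply, smul_eq_mul, vecProjector]
      ring
    show Λ _ P.2 Q.2 = _
    rw [hblock, map_sum]
    rw [Matrix.sum_apply, Matrix.sum_apply]
    refine Finset.sum_congr rfl fun k _ => ?_
    rw [LinearMap.map_smul]
    simp only [Matrix.smul_apply, Matrix.kroneckerMap_apply, smul_eq_mul, vecProjector]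
    ring
  rw [key]
  refine Finset.sum_induction _ _ (fun a b ha hb => ha.add hb) Matrix.PosSemidef.zero
    fun k _ => ?_
  exact posSemidef_real_smul (kron_proj_posSemidef (x k) (hΛ _ (vecProjector_posSemidef (y k))))
    (hp0 k)

/-! #### Product states, compactness, convex hull -/

/-- The set of pure product states. -/
def prodStates (dA dB : ℕ) : Set (Matrix (Fin dA × Fin dB) (Fin dA × Fin dB) ℂ) :=
  {M | ∃ x y, (∑ a, Complex.normSq (x a)) = 1 ∧ (∑ b, Complex.normSq (y b)) = 1 ∧
    M = Matrix.kroneckerMap (· * ·) (vecProjector x) (vecProjector y)}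

def unitSet (d : ℕ) : Set (Fin d → ℂ) := {x | ∑ a, Complex.normSq (x a) = 1}

lemma isCompact_unitSet (d : ℕ) : IsCompact (unitSet d) := by
  have hclosed : IsClosed (unitSet d) := by
    have : Continuous fun x : Fin d → ℂ => ∑ a, Complex.normSq (x a) :=
      continuous_finset_sum _ fun a _ => Complex.continuous_normSq.comp (continuous_apply a)
    exact isClosed_eq this continuous_const
  refine (isCompact_closedBall (0 : Fin d → ℂ) 1).of_isClosed_subset hclosed ?_
  intro x hx
  rw [Metric.mem_closedBall, dist_zero_right]
  refine (pi_norm_le_iff_of_nonneg zero_le_one).2 fun a => ?_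
  have h1 : Complex.normSq (x a) ≤ 1 := by
    rw [← hx]
    exact Finset.single_le_sum (fun b _ => Complex.normSq_nonneg (x b)) (Finset.mem_univ a)
  rw [← (pow_le_one_iff_of_nonneg (norm_nonneg (x a)) two_ne_zero)]
  rw [Complex.sq_norm]; exact h1

lemma isCompact_prodStates (dA dB : ℕ) : IsCompact (prodStates dA dB) := by
  have hc : Continuous fun xy : (Fin dA → ℂ) × (Fin dB → ℂ) =>
      Matrix.kroneckerMap (· * ·) (vecProjector xy.1) (vecProjector xy.2) := by
    refine continuous_matrix fun p q => ?_
    simp only [Matrix.kroneckerMap_apply, vecProjector]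
    have h1 : Continuous fun a : (Fin dA → ℂ) × (Fin dB → ℂ) => a.1 p.1 :=
      (continuous_apply p.1).comp continuous_fst
    have h2 : Continuous fun a : (Fin dA → ℂ) × (Fin dB → ℂ) => a.1 q.1 :=
      (continuous_apply q.1).comp continuous_fst
    have h3 : Continuous fun a : (Fin dA → ℂ) × (Fin dB → ℂ) => a.2 p.2 :=
      (continuous_apply p.2).comp continuous_snd
    have h4 : Continuous fun a : (Fin dA → ℂ) × (Fin dB → ℂ) => a.2 q.2 :=
      (continuous_apply q.2).comp continuous_snd
    exact ((h1.mul (Complex.continuous_conj.comp h2))).mul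
      (h3.mul (Complex.continuous_conj.comp h4))
  have himg : (fun xy : (Fin dA → ℂ) × (Fin dB → ℂ) =>
      Matrix.kroneckerMap (· * ·) (vecProjector xy.1) (vecProjector xy.2)) ''
      (unitSet dA ×ˢ unitSet dB) = prodStates dA dB := by
    ext M
    constructor
    · rintro ⟨⟨x, y⟩, ⟨hx, hy⟩, rfl⟩
      exact ⟨x, y, hx, hy, rfl⟩
    · rintro ⟨x, y, hx, hy, rfl⟩
      exact ⟨⟨x, y⟩, ⟨hx, hy⟩, rfl⟩
  rw [← himg]
  exact (((isCompact_unitSet dA).prod (isCompact_unitSet dB))).image hc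

lemma separable_iff_mem_convexHull
    (ρ : Matrix (Fin dA × Fin dB) (Fin dA × Fin dB) ℂ) :
    SeparableState ρ ↔ ρ ∈ convexHull ℝ (prodStates dA dB) := by
  constructor
  · rintro ⟨K, p, x, y, hp0, hp1, hx, hy, rfl⟩
    have : ∀ k : Fin K, ((p k : ℂ) •
        Matrix.kroneckerMap (· * ·) (vecProjector (x k)) (vecProjector (y k)))
        = p k • Matrix.kroneckerMap (· * ·) (vecProjector (x k)) (vecProjector (y k)) :=
      fun k => (real_smul_matrix _ _).symm
    rw [Finset.sum_congr rfl fun k _ => this k]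
    exact Convex.sum_mem (convex_convexHull ℝ _) (fun k _ => hp0 k) hp1
      (fun k _ => subset_convexHull ℝ _ ⟨x k, y k, hx k, hy k, rfl⟩)
  · intro h
    rw [convexHull_eq] at h
    obtain ⟨ι, t, w, z, hw0, hw1, hz, hcm⟩ := h
    rw [Finset.centerMass_eq_of_sum_1 _ _ hw1] at hcm
    classical
    set e := t.equivFin with he
    refine ⟨t.card, fun k => w (e.symm k), fun k => (hz _ (e.symm k).2).choose,
      fun k => (hz _ (e.symm k).2).choose_spec.choose, fun k => hw0 _ (e.symm k).2, ?_, ?_, ?_, ?_⟩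
    · have h1 : ∑ k, w ((e.symm k) : ι) = ∑ i : t, w i :=
        Equiv.sum_comp e.symm (fun i : t => w (i : ι))
      rw [h1, Finset.sum_coe_sort]
      exact hw1
    · exact fun k => (hz _ (e.symm k).2).choose_spec.choose_spec.1
    · exact fun k => (hz _ (e.symm k).2).choose_spec.choose_spec.2.1
    · have h1 : ∑ k, w ((e.symm k) : ι) • z ((e.symm k) : ι) = ∑ i : t, w (i : ι) • z (i : ι) :=
        Equiv.sum_comp e.symm (fun i : t => w (i : ι) • z (i : ι))
      rw [← hcm, ← Finset.sum_coe_sort t (fun i => w i • z i), ← h1]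
      refine Finset.sum_congr rfl fun k _ => ?_
      rw [real_smul_matrix]
      congr 1
      exact (hz _ (e.symm k).2).choose_spec.choose_spec.2.2

/-! #### The entanglement witness and its pairing -/

section Witness

variable {ι : Type} [Fintype ι] [DecidableEq ι]

/-- entrywise decomposition of a matrix into real/imaginary parts of std basis matrices -/
lemma matrix_decomp (A : Matrix ι ι ℂ) :
    A = ∑ p, ∑ q, ((A p q).re • Matrix.single p q (1 : ℂ)
      + (A p q).im • (Complex.I • Matrix.single p q (1 : ℂ))) := by
  ext a b
  rw [Matrix.sum_apply]
  rw [Finset.sum_eq_single a]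
  · rw [Matrix.sum_apply]
    rw [Finset.sum_eq_single b]
    · simp only [Matrix.add_apply, Matrix.smul_apply, Matrix.of_apply, eq_self_iff_true,
        and_self, if_true, Complex.real_smul, smul_eq_mul,
        Matrix.single_apply_same, mul_one]
      exact (Complex.re_add_im _).symm
    · intro q _ hq
      simp [Matrix.single, hq]
    · simp
  · intro p _ hp
    rw [Matrix.sum_apply]
    refine Finset.sum_eq_zero fun q _ => ?_
    simp [Matrix.single, hp]
  · simp

def wMat (g : Matrix ι ι ℂ →ₗ[ℝ] ℝ) (p q : ι) : ℂ :=
  (g (Matrix.single p q (1 : ℂ)) : ℂ)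
    - Complex.I * (g (Complex.I • Matrix.single p q (1 : ℂ)) : ℂ)

def WMat (g : Matrix ι ι ℂ →ₗ[ℝ] ℝ) (p q : ι) : ℂ :=
  (wMat g p q + conj' (wMat g q p)) / 2

lemma WMat_herm (g : Matrix ι ι ℂ →ₗ[ℝ] ℝ) (p q : ι) :
    conj' (WMat g p q) = WMat g q p := by
  have h2 : conj' (2 : ℂ) = 2 := by rw [Complex.ext_iff]; simp
  rw [WMat, WMat, map_div₀, map_add, h2, Complex.conj_conj]
  ring

lemma pairW (g : Matrix ι ι ℂ →ₗ[ℝ] ℝ) {A : Matrix ι ι ℂ} (hA : A.IsHermitian) :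
    ∑ p, ∑ q, WMat g p q * A p q = ((g A : ℝ) : ℂ) := by
  have hAc : ∀ p q, conj' (A p q) = A q p := fun p q => congrFun (congrFun hA q) p
  set z : ℂ := ∑ p, ∑ q, wMat g p q * A p q with hz
  have h1 : ∑ p, ∑ q, WMat g p q * A p q = (z + conj' z) / 2 := by
    have hconjz : conj' z = ∑ p, ∑ q, conj' (wMat g q p) * A p q := by
      rw [hz, map_sum]
      rw [Finset.sum_comm]
      refine Finset.sum_congr rfl fun p _ => ?_
      rw [map_sum]
      refine Finset.sum_congr rfl fun q _ => ?_
      rw [map_mul, hAc]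
    rw [hconjz, hz]
    rw [← Finset.sum_add_distrib, Finset.sum_div]
    refine Finset.sum_congr rfl fun p _ => ?_
    rw [← Finset.sum_add_distrib, Finset.sum_div]
    refine Finset.sum_congr rfl fun q _ => ?_
    rw [WMat]
    ring
  have h2 : z.re = g A := by
    have hgA : g A = ∑ p, ∑ q, ((A p q).re * g (Matrix.single p q (1 : ℂ))
        + (A p q).im * g (Complex.I • Matrix.single p q (1 : ℂ))) := by
      conv_lhs => rw [matrix_decomp A]
      rw [map_sum]
      refine Finset.sum_congr rfl fun p _ => ?_
      rw [map_sum]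
      refine Finset.sum_congr rfl fun q _ => ?_
      rw [map_add, map_smul, map_smul, smul_eq_mul, smul_eq_mul]
    rw [hz, Complex.re_sum, hgA]
    refine Finset.sum_congr rfl fun p _ => ?_
    rw [Complex.re_sum]
    refine Finset.sum_congr rfl fun q _ => ?_
    simp [wMat, Complex.mul_re, Complex.sub_re, Complex.sub_im]
    ring
  rw [h1, Complex.add_conj, ← h2]
  push_cast
  ring

end Witness

/-! #### The map built from a witness -/

/-- The Jamiołkowski-type map built from the functional `g`. -/
def lamW (g : Matrix (Fin dA × Fin dB) (Fin dA × Fin dB) ℂ →ₗ[ℝ] ℝ) :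
    Matrix (Fin dB) (Fin dB) ℂ →ₗ[ℂ] Matrix (Fin dA) (Fin dA) ℂ where
  toFun X := Matrix.of fun μ ν => ∑ α, ∑ β, WMat g (μ, α) (ν, β) * X α β
  map_add' X Y := by
    ext μ ν
    simp [mul_add, Finset.sum_add_distrib]
  map_smul' c X := by
    ext μ ν
    simp only [Matrix.of_apply, Matrix.smul_apply, RingHom.id_apply, smul_eq_mul,
      Finset.mul_sum]
    refine Finset.sum_congr rfl fun α _ => Finset.sum_congr rfl fun β _ => ?_
    show WMat g (μ, α) (ν, β) * (c * X α β) = c * (WMat g (μ, α) (ν, β) * X α β)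
    ring

lemma lamW_herm (g : Matrix (Fin dA × Fin dB) (Fin dA × Fin dB) ℂ →ₗ[ℝ] ℝ)
    {X : Matrix (Fin dB) (Fin dB) ℂ} (hX : X.IsHermitian) : (lamW g X).IsHermitian := by
  have hXc : ∀ α β, conj' (X α β) = X β α := fun α β => congrFun (congrFun hX β) α
  ext μ ν
  show conj' ((lamW g X) ν μ) = (lamW g X) μ ν
  show conj' (∑ α, ∑ β, WMat g (ν, α) (μ, β) * X α β) = ∑ α, ∑ β, WMat g (μ, α) (ν, β) * X α β
  rw [map_sum, Finset.sum_comm]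
  refine Finset.sum_congr rfl fun α _ => ?_
  rw [map_sum]
  refine Finset.sum_congr rfl fun β _ => ?_
  rw [map_mul, hXc, WMat_herm]

lemma lamW_quad (g : Matrix (Fin dA × Fin dB) (Fin dA × Fin dB) ℂ →ₗ[ℝ] ℝ)
    (v : Fin dA → ℂ) (y : Fin dB → ℂ) :
    dotProduct (star v) ((lamW g (vecProjector y)).mulVec v)
      = ∑ p, ∑ q, WMat g p q *
        (Matrix.kroneckerMap (· * ·) (vecProjector (star v)) (vecProjector y)) p q := by
  rw [quad]
  rw [Fintype.sum_prod_type (f := fun p => ∑ q, WMat g p q *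
    (Matrix.kroneckerMap (· * ·) (vecProjector (star v)) (vecProjector y)) p q)]
  refine Finset.sum_congr rfl fun μ _ => ?_
  have lhs1 : ∀ ν : Fin dA, conj' (v μ) * (lamW g (vecProjector y)) μ ν * v ν
      = ∑ α, ∑ β, conj' (v μ) * (WMat g (μ, α) (ν, β) * (y α * conj' (y β))) * v ν := by
    intro ν
    show (conj' (v μ) * ∑ α, ∑ β, WMat g (μ, α) (ν, β) * vecProjector y α β) * v ν = _
    rw [Finset.mul_sum, Finset.sum_mul]
    refine Finset.sum_congr rfl fun α _ => ?_
    rw [Finset.mul_sum, Finset.sum_mul]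
    refine Finset.sum_congr rfl fun β _ => ?_
    simp only [vecProjector]
  simp only [lhs1]
  rw [Finset.sum_comm]
  refine Finset.sum_congr rfl fun α _ => ?_
  rw [Fintype.sum_prod_type (f := fun q => WMat g (μ, α) q *
    (Matrix.kroneckerMap (· * ·) (vecProjector (star v)) (vecProjector y)) (μ, α) q)]
  refine Finset.sum_congr rfl fun ν _ => ?_
  refine Finset.sum_congr rfl fun β _ => ?_
  simp only [Matrix.kroneckerMap_apply, vecProjector, Pi.star_apply, Complex.star_def,
    Complex.conj_conj]
  ring

lemma lamW_pos (g : Matrix (Fin dA × Fin dB) (Fin dA × Fin dB) ℂ →ₗ[ℝ] ℝ)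
    (hkey : ∀ (v : Fin dA → ℂ) (w : Fin dB → ℂ),
      0 ≤ g (Matrix.kroneckerMap (· * ·) (vecProjector v) (vecProjector w))) :
    IsPositiveMap (lamW g) := by
  intro X hX
  obtain ⟨B, hB⟩ : ∃ B : Matrix (Fin dB) (Fin dB) ℂ, X = B.conjTranspose * B := by
    open scoped MatrixOrder Matrix.Norms.L2Operator in
    exact CStarAlgebra.nonneg_iff_eq_star_mul_self.mp hX.nonneg
  set y : Fin dB → Fin dB → ℂ := fun k α => conj' (B k α) with hy
  have hXsum : X = ∑ k, vecProjector (y k) := by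
    ext α β
    rw [Matrix.sum_apply, hB, Matrix.mul_apply]
    refine Finset.sum_congr rfl fun k _ => ?_
    simp [vecProjector, hy, Matrix.conjTranspose_apply]
  refine Matrix.PosSemidef.of_dotProduct_mulVec_nonneg ?_ ?_
  · exact lamW_herm g hX.1
  · intro v
    rw [hXsum, map_sum]
    have hsum : dotProduct (star v) ((∑ k, lamW g (vecProjector (y k))).mulVec v)
        = ∑ k, dotProduct (star v) ((lamW g (vecProjector (y k))).mulVec v) := by
      rw [quad]
      have e1 : ∀ p q : Fin dA, conj' (v p) * (∑ k, lamW g (vecProjector (y k))) p q * v q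
          = ∑ k, conj' (v p) * (lamW g (vecProjector (y k))) p q * v q := by
        intro p q
        simp only [Matrix.sum_apply, Finset.mul_sum, Finset.sum_mul]
      simp only [e1]
      have e2 : ∀ k, dotProduct (star v) ((lamW g (vecProjector (y k))).mulVec v)
          = ∑ p, ∑ q, conj' (v p) * (lamW g (vecProjector (y k))) p q * v q :=
        fun k => quad _ _
      simp only [e2]
      calc (∑ p, ∑ q, ∑ k, conj' (v p) * (lamW g (vecProjector (y k))) p q * v q)
          = ∑ p, ∑ k, ∑ q, conj' (v p) * (lamW g (vecProjector (y k))) p q * v q :=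
            Finset.sum_congr rfl fun p _ => Finset.sum_comm
        _ = ∑ k, ∑ p, ∑ q, conj' (v p) * (lamW g (vecProjector (y k))) p q * v q :=
            Finset.sum_comm
    rw [hsum]
    refine Finset.sum_nonneg fun k _ => ?_
    rw [lamW_quad, pairW g (kron_isHermitian (vecProjector_posSemidef (star v)).1
      (vecProjector_posSemidef (y k)).1)]
    exact Complex.zero_le_real.2 (hkey _ _)


/-! #### Trace of product states and nonnegativity by scaling -/

lemma trace_prodState {σ : Matrix (Fin dA × Fin dB) (Fin dA × Fin dB) ℂ}
    (h : σ ∈ prodStates dA dB) : σ.trace = 1 := by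
  obtain ⟨x, y, hx, hy, rfl⟩ := h
  have step : (Matrix.kroneckerMap (· * ·) (vecProjector x) (vecProjector y)).trace
      = (∑ i, (Complex.normSq (x i) : ℂ)) * (∑ μ, (Complex.normSq (y μ) : ℂ)) := by
    rw [Matrix.trace, Finset.sum_mul_sum]
    rw [Fintype.sum_prod_type (f := fun P : Fin dA × Fin dB =>
      (Matrix.kroneckerMap (· * ·) (vecProjector x) (vecProjector y)).diag P)]
    refine Finset.sum_congr rfl fun i _ => Finset.sum_congr rfl fun μ _ => ?_
    show vecProjector x i i * vecProjector y μ μ = _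
    simp only [vecProjector, Complex.mul_conj]
  rw [step]
  have hx' : (∑ i, (Complex.normSq (x i) : ℂ)) = 1 := by
    rw [← Complex.ofReal_sum, hx, Complex.ofReal_one]
  have hy' : (∑ μ, (Complex.normSq (y μ) : ℂ)) = 1 := by
    rw [← Complex.ofReal_sum, hy, Complex.ofReal_one]
  rw [hx', hy', one_mul]

lemma kron_smul (c d : ℂ) (A : Matrix (Fin dA) (Fin dA) ℂ) (B : Matrix (Fin dB) (Fin dB) ℂ) :
    Matrix.kroneckerMap (· * ·) (c • A) (d • B)
      = (c * d) • Matrix.kroneckerMap (· * ·) A B := by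
  ext p q
  simp only [Matrix.kroneckerMap_apply, Matrix.smul_apply, smul_eq_mul]
  ring

lemma vecProjector_zero_of (v : Fin dA → ℂ) (hv : ∑ a, Complex.normSq (v a) = 0) :
    vecProjector v = 0 := by
  have h0 : ∀ a, v a = 0 := by
    intro a
    exact Complex.normSq_eq_zero.1
      ((Finset.sum_eq_zero_iff_of_nonneg fun b _ => Complex.normSq_nonneg (v b)).1 hv a
        (Finset.mem_univ a))
  ext i j
  simp [vecProjector, h0]

lemma vecProjector_rescale {v : Fin dA → ℂ} {a : ℝ} (ha : 0 < a)
    (hva : ∑ i, Complex.normSq (v i) = a) :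
    vecProjector v = (a : ℂ) • vecProjector (fun i => ((Real.sqrt a)⁻¹ : ℂ) * v i)
      ∧ ∑ i, Complex.normSq (((Real.sqrt a)⁻¹ : ℂ) * v i) = 1 := by
  have hsq : (Real.sqrt a) * (Real.sqrt a) = a := Real.mul_self_sqrt ha.le
  constructor
  · ext i j
    simp only [vecProjector, Matrix.smul_apply, map_mul, Complex.conj_ofReal, smul_eq_mul,
      map_inv₀]
    have hscal : ((a : ℝ) : ℂ) * (((Real.sqrt a)⁻¹ : ℝ) : ℂ) * (((Real.sqrt a)⁻¹ : ℝ) : ℂ)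
        = 1 := by
      rw [← Complex.ofReal_mul, ← Complex.ofReal_mul, ← Complex.ofReal_one]
      congr 1
      rw [mul_assoc, ← mul_inv, hsq, mul_inv_cancel₀ ha.ne']
    calc v i * conj' (v j) = (((a : ℝ) : ℂ) * (((Real.sqrt a)⁻¹ : ℝ) : ℂ)
          * (((Real.sqrt a)⁻¹ : ℝ) : ℂ)) * (v i * conj' (v j)) := by rw [hscal, one_mul]
      _ = _ := by push_cast; ring
  · have : ∀ i, Complex.normSq (((Real.sqrt a)⁻¹ : ℂ) * v i)
        = a⁻¹ * Complex.normSq (v i) := by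
      intro i
      rw [map_mul]
      congr 1
      rw [← Complex.ofReal_inv, Complex.normSq_ofReal, ← mul_inv, hsq]
    simp only [this, ← Finset.mul_sum, hva]
    exact inv_mul_cancel₀ ha.ne'

lemma key_nonneg (g : Matrix (Fin dA × Fin dB) (Fin dA × Fin dB) ℂ →ₗ[ℝ] ℝ)
    (hgpos : ∀ σ ∈ prodStates dA dB, 0 < g σ) (v : Fin dA → ℂ) (w : Fin dB → ℂ) :
    0 ≤ g (Matrix.kroneckerMap (· * ·) (vecProjector v) (vecProjector w)) := by
  by_cases hv : ∑ a, Complex.normSq (v a) = 0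
  · have h0 : Matrix.kroneckerMap (· * ·) (vecProjector v) (vecProjector w) = 0 := by
      ext p q
      simp [Matrix.kroneckerMap_apply, vecProjector_zero_of v hv]
    rw [h0, map_zero]
  by_cases hw : ∑ b, Complex.normSq (w b) = 0
  · have h0 : Matrix.kroneckerMap (· * ·) (vecProjector v) (vecProjector w) = 0 := by
      ext p q
      simp [Matrix.kroneckerMap_apply, vecProjector_zero_of w hw]
    rw [h0, map_zero]
  have ha : 0 < ∑ a, Complex.normSq (v a) :=
    (Finset.sum_nonneg fun b _ => Complex.normSq_nonneg (v b)).lt_of_ne (Ne.symm hv)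
  have hb : 0 < ∑ b, Complex.normSq (w b) :=
    (Finset.sum_nonneg fun b _ => Complex.normSq_nonneg (w b)).lt_of_ne (Ne.symm hw)
  obtain ⟨hv1, hv2⟩ := vecProjector_rescale ha rfl
  obtain ⟨hw1, hw2⟩ := vecProjector_rescale hb rfl
  set a := ∑ i, Complex.normSq (v i)
  set b := ∑ i, Complex.normSq (w i)
  set v' := fun i => ((Real.sqrt a)⁻¹ : ℂ) * v i
  set w' := fun i => ((Real.sqrt b)⁻¹ : ℂ) * w i
  have hkron : Matrix.kroneckerMap (· * ·) (vecProjector v) (vecProjector w)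
      = (a * b : ℝ) • Matrix.kroneckerMap (· * ·) (vecProjector v') (vecProjector w') := by
    rw [hv1, hw1, kron_smul, real_smul_matrix]
    push_cast
    ring_nf
  rw [hkron, map_smul, smul_eq_mul]
  exact mul_nonneg (mul_nonneg ha.le hb.le)
    (hgpos _ ⟨v', w', hv2, hw2, rfl⟩).le

/-! #### Detection of entanglement -/

def maxEnt (dA : ℕ) : Fin dA × Fin dA → ℂ := fun P => if P.1 = P.2 then 1 else 0

lemma detect (g : Matrix (Fin dA × Fin dB) (Fin dA × Fin dB) ℂ →ₗ[ℝ] ℝ)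
    {ρ : Matrix (Fin dA × Fin dB) (Fin dA × Fin dB) ℂ} (hherm : ρ.IsHermitian) :
    dotProduct (star (maxEnt dA)) ((extendMap (lamW g) ρ).mulVec (maxEnt dA))
      = ((g ρ : ℝ) : ℂ) := by
  rw [quad]
  have step1 : ∑ P, ∑ Q, conj' (maxEnt dA P) * (extendMap (lamW g) ρ) P Q * maxEnt dA Q
      = ∑ i, ∑ j, (extendMap (lamW g) ρ) (i, i) (j, j) := by
    rw [Fintype.sum_prod_type (f := fun P => ∑ Q,
      conj' (maxEnt dA P) * (extendMap (lamW g) ρ) P Q * maxEnt dA Q)]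
    refine Finset.sum_congr rfl fun i _ => ?_
    rw [Finset.sum_eq_single i]
    · have inner : ∀ Q, conj' (maxEnt dA (i, i)) * (extendMap (lamW g) ρ) (i, i) Q * maxEnt dA Q
          = (extendMap (lamW g) ρ) (i, i) Q * maxEnt dA Q := by
        intro Q
        simp [maxEnt]
      simp only [inner]
      rw [Fintype.sum_prod_type (f := fun Q => (extendMap (lamW g) ρ) (i, i) Q * maxEnt dA Q)]
      refine Finset.sum_congr rfl fun j _ => ?_
      rw [Finset.sum_eq_single j]
      · simp [maxEnt]
      · intro ν _ hν
        simp [maxEnt, hν.symm]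
      · simp
    · intro μ _ hμ
      refine Finset.sum_eq_zero fun Q _ => ?_
      have : maxEnt dA (i, μ) = 0 := by simp [maxEnt, hμ.symm]
      simp [this]
    · simp
  rw [step1]
  have step2 : ∀ i j : Fin dA, (extendMap (lamW g) ρ) (i, i) (j, j)
      = ∑ α, ∑ β, WMat g (i, α) (j, β) * ρ (i, α) (j, β) := fun i j => rfl
  simp only [step2]
  rw [← pairW g hherm]
  rw [Fintype.sum_prod_type (f := fun p => ∑ q, WMat g p q * ρ p q)]
  refine Finset.sum_congr rfl fun i _ => ?_
  have e1 : ∀ α, ∑ q : Fin dA × Fin dB, WMat g (i, α) q * ρ (i, α) q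
      = ∑ j, ∑ β, WMat g (i, α) (j, β) * ρ (i, α) (j, β) := by
    intro α
    rw [Fintype.sum_prod_type (f := fun q => WMat g (i, α) q * ρ (i, α) q)]
  simp only [e1]
  exact (Finset.sum_comm).symm

/-! #### The backward direction -/

lemma backward_dir (ρ : Matrix (Fin dA × Fin dB) (Fin dA × Fin dB) ℂ)
    (hpsd : ρ.PosSemidef) (htr : ρ.trace = 1) (hns : ¬ SeparableState ρ) :
    ∃ Λ : Matrix (Fin dB) (Fin dB) ℂ →ₗ[ℂ] Matrix (Fin dA) (Fin dA) ℂ,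
      IsPositiveMap Λ ∧ ¬ (extendMap Λ ρ).PosSemidef := by
  have hρS : ρ ∉ convexHull ℝ (prodStates dA dB) := fun h =>
    hns ((separable_iff_mem_convexHull ρ).2 h)
  have hclosed : IsClosed (convexHull ℝ (prodStates dA dB)) :=
    (myIsCompact_convexHull (isCompact_prodStates dA dB)).isClosed
  haveI : LocallyConvexSpace ℝ (Matrix (Fin dA × Fin dB) (Fin dA × Fin dB) ℂ) :=
    NormedSpace.toLocallyConvexSpace
  obtain ⟨f, u, hfu, huρ⟩ :=
    geometric_hahn_banach_closed_point (convex_convexHull ℝ _) hclosed hρS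
  set g : Matrix (Fin dA × Fin dB) (Fin dA × Fin dB) ℂ →ₗ[ℝ] ℝ :=
    u • (Complex.reLm.comp (Matrix.traceLinearMap (Fin dA × Fin dB) ℝ ℂ))
      - (f : Matrix (Fin dA × Fin dB) (Fin dA × Fin dB) ℂ →ₗ[ℝ] ℝ) with hg
  have hgapp : ∀ A, g A = u * A.trace.re - f A := by
    intro A
    simp [hg, LinearMap.sub_apply, LinearMap.smul_apply, smul_eq_mul]
  have hgpos : ∀ σ ∈ prodStates dA dB, 0 < g σ := by
    intro σ hσ
    rw [hgapp, trace_prodState hσ]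
    have := hfu σ (subset_convexHull ℝ _ hσ)
    simp only [Complex.one_re, mul_one]
    linarith
  have hgρ : g ρ < 0 := by
    rw [hgapp, htr]
    simp only [Complex.one_re, mul_one]
    linarith
  refine ⟨lamW g, lamW_pos g (key_nonneg g hgpos), fun hPSD => ?_⟩
  have h0 := hPSD.dotProduct_mulVec_nonneg (maxEnt dA)
  rw [detect g hpsd.1] at h0
  exact absurd (Complex.zero_le_real.1 h0) (not_le.2 hgρ)

end

end Horodecki

/-- **Horodecki positive-maps separability criterion.** A density matrix `ρ` on
`ℂ^{d_A} ⊗ ℂ^{d_B}` is separable if and only if `(I_{d_A} ⊗ Λ)(ρ)` is positive semidefinite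
for every positive linear map `Λ` from `d_B × d_B` to `d_A × d_A` complex matrices. -/
theorem separable_iff_positive_maps (dA dB : ℕ)
    (ρ : Matrix (Fin dA × Fin dB) (Fin dA × Fin dB) ℂ)
    (hpsd : ρ.PosSemidef) (htr : ρ.trace = 1) :
    SeparableState ρ ↔
      ∀ Λ : Matrix (Fin dB) (Fin dB) ℂ →ₗ[ℂ] Matrix (Fin dA) (Fin dA) ℂ,
        IsPositiveMap Λ → (extendMap Λ ρ).PosSemidef := by
  constructor
  · exact fun hsep Λ hΛ => Horodecki.forward_dir ρ hsep Λ hΛ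
  · intro hall
    by_contra hns
    obtain ⟨Λ, hΛ, hbad⟩ := Horodecki.backward_dir ρ hpsd htr hns
    exact hbad (hall Λ hΛ)
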